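/- Let A ∈ ℝ^{n×n}, B ∈ ℝ^{n×1}, C ∈ ℝ^{p×n}, and assume the sign condition Bᵀ e^{Aᵀt} Cᵀ C e^{As} B ≥ 0 for all t, s ≥ 0. Then for every T > 0 and every measurable u : [0,T] → ℝ with |u(s)| ≤ 1 a.e., |∫₀^T C e^{A(T−s)} B u(s) ds| ≤ |∫₀^T C e^{As} B ds|; i.e. the constant input u ≡ 1 maximizes |Cx(T)| over all inputs bounded by 1. -/

import Mathlib

open Filter MeasureTheory NormedSpace

noncomputable section

/-- Euclidean norm of a vector in `ℝ^k`. -/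
def eNorm {k : ℕ} (v : Fin k → ℝ) : ℝ := Real.sqrt (∑ i, v i ^ 2)

/-- Matrix norm induced by the Euclidean norms. -/
def matNorm {k l : ℕ} (M : Matrix (Fin k) (Fin l) ℝ) : ℝ :=
  sSup {r | ∃ x : Fin l → ℝ, eNorm x = 1 ∧ r = eNorm (M.mulVec x)}

/-- `A` is Hurwitz: every (complex) eigenvalue of `A` has negative real part. -/
def Hurwitz {n : ℕ} (A : Matrix (Fin n) (Fin n) ℝ) : Prop :=
  ∀ μ ∈ spectrum ℂ (A.map (Complex.ofReal)), μ.re < 0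

/-- The matrix exponential `e^{tA}`. -/
def mexp {n : ℕ} (A : Matrix (Fin n) (Fin n) ℝ) (t : ℝ) : Matrix (Fin n) (Fin n) ℝ :=
  exp (t • A)

section Aux
attribute [local instance] Matrix.linftyOpNormedRing Matrix.linftyOpNormedAlgebra

lemma mexp_continuous {n : ℕ} (A : Matrix (Fin n) (Fin n) ℝ) :
    Continuous fun t : ℝ => mexp A t := by
  unfold mexp
  exact exp_continuous.comp (continuous_id.smul continuous_const)
end Aux

lemma pi_integral_apply {p : ℕ} {μ : Measure ℝ} {f : ℝ → Fin p → ℝ}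
    (hf : Integrable f μ) (i : Fin p) :
    (∫ s, f s ∂μ) i = ∫ s, f s i ∂μ := by
  have := (ContinuousLinearMap.proj (R := ℝ) (φ := fun _ : Fin p => ℝ) i).integral_comp_comm hf
  simpa using this.symm

lemma key_ineq {p : ℕ} (f : ℝ → Fin p → ℝ) (hfc : Continuous f) (T : ℝ) (hT : 0 < T)
    (hK : ∀ s ∈ Set.Icc (0:ℝ) T, ∀ t ∈ Set.Icc (0:ℝ) T, 0 ≤ ∑ i, f s i * f t i)
    (u : ℝ → ℝ) (hu_meas : Measurable u)
    (hu : ∀ᵐ s ∂(volume.restrict (Set.Ioc (0:ℝ) T)), |u s| ≤ 1) :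
    ∑ i, (∫ s in Set.Ioc (0:ℝ) T, u s * f s i) ^ 2 ≤
      ∑ i, (∫ s in Set.Ioc (0:ℝ) T, f s i) ^ 2 := by
  have hfci : ∀ i : Fin p, Continuous fun s => f s i :=
    fun i => (continuous_apply i).comp hfc
  have hfi : ∀ i : Fin p, Integrable (fun s => f s i) (volume.restrict (Set.Ioc (0:ℝ) T)) :=
    fun i => (hfci i).integrableOn_Ioc
  have hufi : ∀ i : Fin p, Integrable (fun s => u s * f s i)
      (volume.restrict (Set.Ioc (0:ℝ) T)) := by
    intro i
    refine Integrable.mono' (hfi i).abs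
      (hu_meas.aestronglyMeasurable.mul (hfci i).aestronglyMeasurable) ?_
    filter_upwards [hu] with s hus
    rw [Real.norm_eq_abs, abs_mul]
    calc |u s| * |f s i| ≤ 1 * |f s i| :=
          mul_le_mul_of_nonneg_right hus (abs_nonneg _)
      _ = |f s i| := one_mul _
  set a : Fin p → ℝ := fun i => ∫ s in Set.Ioc (0:ℝ) T, u s * f s i with ha
  set b : Fin p → ℝ := fun i => ∫ s in Set.Ioc (0:ℝ) T, f s i with hb
  set φ : ℝ → ℝ := fun s => ∑ i, f s i * a i with hφ
  set ψ : ℝ → ℝ := fun s => ∑ i, f s i * b i with hψ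
  have hφc : Continuous φ := continuous_finset_sum _ fun i _ => (hfci i).mul continuous_const
  have hψc : Continuous ψ := continuous_finset_sum _ fun i _ => (hfci i).mul continuous_const
  have step1 : ∑ i, a i ^ 2 = ∫ s in Set.Ioc (0:ℝ) T, u s * φ s := by
    calc ∑ i, a i ^ 2 = ∑ i, ∫ s in Set.Ioc (0:ℝ) T, (u s * f s i) * a i := by
          refine Finset.sum_congr rfl fun i _ => ?_
          rw [integral_mul_const]; ring
      _ = ∫ s in Set.Ioc (0:ℝ) T, ∑ i, (u s * f s i) * a i :=
          (integral_finset_sum _ fun i _ => (hufi i).mul_const _).symm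
      _ = ∫ s in Set.Ioc (0:ℝ) T, u s * φ s := by
          refine integral_congr_ae (Eventually.of_forall fun s => ?_)
          simp only [hφ, Finset.mul_sum]
          exact Finset.sum_congr rfl fun i _ => by ring
  have step2 : ∑ i, b i ^ 2 = ∫ s in Set.Ioc (0:ℝ) T, ψ s := by
    calc ∑ i, b i ^ 2 = ∑ i, ∫ s in Set.Ioc (0:ℝ) T, f s i * b i := by
          refine Finset.sum_congr rfl fun i _ => ?_
          rw [integral_mul_const]; ring
      _ = ∫ s in Set.Ioc (0:ℝ) T, ∑ i, f s i * b i :=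
          (integral_finset_sum _ fun i _ => (hfi i).mul_const _).symm
      _ = ∫ s in Set.Ioc (0:ℝ) T, ψ s := rfl
  have hφψ : ∀ s ∈ Set.Icc (0:ℝ) T, |φ s| ≤ ψ s := by
    intro s hs
    have hintK : Integrable (fun t => ∑ i, f s i * f t i)
        (volume.restrict (Set.Ioc (0:ℝ) T)) :=
      integrable_finset_sum _ fun i _ => (hfi i).const_mul _
    have hintuK : Integrable (fun t => u t * ∑ i, f s i * f t i)
        (volume.restrict (Set.Ioc (0:ℝ) T)) := by
      refine Integrable.mono' hintK.abs
        (hu_meas.aestronglyMeasurable.mul hintK.1) ?_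
      filter_upwards [hu] with t hut
      rw [Real.norm_eq_abs, abs_mul]
      calc |u t| * |∑ i, f s i * f t i| ≤ 1 * |∑ i, f s i * f t i| :=
            mul_le_mul_of_nonneg_right hut (abs_nonneg _)
        _ = |∑ i, f s i * f t i| := one_mul _
    have h1 : φ s = ∫ t in Set.Ioc (0:ℝ) T, u t * ∑ i, f s i * f t i := by
      calc φ s = ∑ i, f s i * ∫ t in Set.Ioc (0:ℝ) T, u t * f t i := rfl
        _ = ∑ i, ∫ t in Set.Ioc (0:ℝ) T, f s i * (u t * f t i) := by
            refine Finset.sum_congr rfl fun i _ => ?_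
            rw [integral_const_mul]
        _ = ∫ t in Set.Ioc (0:ℝ) T, ∑ i, f s i * (u t * f t i) :=
            (integral_finset_sum _ fun i _ => (hufi i).const_mul _).symm
        _ = ∫ t in Set.Ioc (0:ℝ) T, u t * ∑ i, f s i * f t i := by
            refine integral_congr_ae (Eventually.of_forall fun t => ?_)
            simp only [Finset.mul_sum]
            exact Finset.sum_congr rfl fun i _ => by ring
    have h2 : ψ s = ∫ t in Set.Ioc (0:ℝ) T, ∑ i, f s i * f t i := by
      calc ψ s = ∑ i, f s i * ∫ t in Set.Ioc (0:ℝ) T, f t i := rfl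
        _ = ∑ i, ∫ t in Set.Ioc (0:ℝ) T, f s i * f t i := by
            refine Finset.sum_congr rfl fun i _ => ?_
            rw [integral_const_mul]
        _ = ∫ t in Set.Ioc (0:ℝ) T, ∑ i, f s i * f t i :=
            (integral_finset_sum _ fun i _ => (hfi i).const_mul _).symm
    rw [h1, h2]
    calc |∫ t in Set.Ioc (0:ℝ) T, u t * ∑ i, f s i * f t i|
        ≤ ∫ t in Set.Ioc (0:ℝ) T, |u t * ∑ i, f s i * f t i| :=
          by
            simpa only [Real.norm_eq_abs] using
              norm_integral_le_integral_norm (μ := volume.restrict (Set.Ioc (0:ℝ) T))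
                (fun t => u t * ∑ i, f s i * f t i)
      _ ≤ ∫ t in Set.Ioc (0:ℝ) T, ∑ i, f s i * f t i := by
          refine integral_mono_ae hintuK.abs hintK ?_
          filter_upwards [hu, ae_restrict_mem measurableSet_Ioc] with t hut htm
          have hK0 : 0 ≤ ∑ i, f s i * f t i := hK s hs t (Set.Ioc_subset_Icc_self htm)
          rw [abs_mul, abs_of_nonneg hK0]
          calc |u t| * (∑ i, f s i * f t i) ≤ 1 * (∑ i, f s i * f t i) :=
                mul_le_mul_of_nonneg_right hut hK0
            _ = ∑ i, f s i * f t i := one_mul _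
  have hψint : Integrable ψ (volume.restrict (Set.Ioc (0:ℝ) T)) := hψc.integrableOn_Ioc
  have huφint : Integrable (fun s => u s * φ s) (volume.restrict (Set.Ioc (0:ℝ) T)) := by
    refine Integrable.mono' (hφc.integrableOn_Ioc (a := 0) (b := T)).abs
      (hu_meas.aestronglyMeasurable.mul hφc.aestronglyMeasurable) ?_
    filter_upwards [hu] with s hus
    rw [Real.norm_eq_abs, abs_mul]
    calc |u s| * |φ s| ≤ 1 * |φ s| := mul_le_mul_of_nonneg_right hus (abs_nonneg _)
      _ = |φ s| := one_mul _
  rw [step1, step2]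
  refine integral_mono_ae huφint hψint ?_
  filter_upwards [hu, ae_restrict_mem measurableSet_Ioc] with s hus hsm
  have h := hφψ s (Set.Ioc_subset_Icc_self hsm)
  calc u s * φ s ≤ |u s * φ s| := le_abs_self _
    _ = |u s| * |φ s| := abs_mul _ _
    _ ≤ 1 * |φ s| := mul_le_mul_of_nonneg_right hus (abs_nonneg _)
    _ = |φ s| := one_mul _
    _ ≤ ψ s := h


/-- Section 5.2, formula (5.9): under the sign condition
`Bᵀe^{Aᵀt}CᵀCe^{As}B ≥ 0` for all `t,s ≥ 0`, the constant input `u ≡ 1` maximizes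
`|Cx(T)|` over all inputs bounded by `1`. -/
theorem statement_12 {n p : ℕ}
    (A : Matrix (Fin n) (Fin n) ℝ) (B : Fin n → ℝ) (C : Matrix (Fin p) (Fin n) ℝ)
    (hsign : ∀ t ≥ (0 : ℝ), ∀ s ≥ (0 : ℝ),
      0 ≤ dotProduct (C.mulVec ((mexp A t).mulVec B))
            (C.mulVec ((mexp A s).mulVec B)))
    (T : ℝ) (hT : 0 < T)
    (u : ℝ → ℝ) (hu_meas : Measurable u)
    (hu_bdd : ∀ᵐ s ∂(volume.restrict (Set.Icc (0 : ℝ) T)), |u s| ≤ 1) :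
    eNorm (∫ s in (0 : ℝ)..T, u s • C.mulVec ((mexp A (T - s)).mulVec B)) ≤
      eNorm (∫ s in (0 : ℝ)..T, C.mulVec ((mexp A s).mulVec B)) := by
  set f : ℝ → Fin p → ℝ := fun s => C.mulVec ((mexp A (T - s)).mulVec B) with hfd
  have hfc : Continuous f :=
    Continuous.matrix_mulVec continuous_const
      (Continuous.matrix_mulVec
        ((mexp_continuous A).comp (continuous_const.sub continuous_id)) continuous_const)
  have hu : ∀ᵐ s ∂(volume.restrict (Set.Ioc (0:ℝ) T)), |u s| ≤ 1 :=
    ae_restrict_of_ae_restrict_of_subset Set.Ioc_subset_Icc_self hu_bdd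
  have hK : ∀ s ∈ Set.Icc (0:ℝ) T, ∀ t ∈ Set.Icc (0:ℝ) T, 0 ≤ ∑ i, f s i * f t i := by
    intro s hs t ht
    have h := hsign (T - s) (by linarith [hs.2]) (T - t) (by linarith [ht.2])
    simpa [dotProduct, hfd] using h
  have hfint : Integrable f (volume.restrict (Set.Ioc (0:ℝ) T)) := hfc.integrableOn_Ioc
  have hufint : Integrable (fun s => u s • f s) (volume.restrict (Set.Ioc (0:ℝ) T)) := by
    refine Integrable.mono' hfint.norm
      (hu_meas.aestronglyMeasurable.smul hfc.aestronglyMeasurable) ?_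
    filter_upwards [hu] with s hus
    rw [norm_smul, Real.norm_eq_abs]
    calc |u s| * ‖f s‖ ≤ 1 * ‖f s‖ := mul_le_mul_of_nonneg_right hus (norm_nonneg _)
      _ = ‖f s‖ := one_mul _
  have key := key_ineq f hfc T hT hK u hu_meas hu
  have hLcomp : ∀ i, (∫ s in (0:ℝ)..T, u s • f s) i = ∫ s in Set.Ioc (0:ℝ) T, u s * f s i := by
    intro i
    rw [intervalIntegral.integral_of_le hT.le, pi_integral_apply hufint i]
    simp only [Pi.smul_apply, smul_eq_mul]
  have hRcomp : ∀ i, (∫ s in (0:ℝ)..T, C.mulVec ((mexp A s).mulVec B)) i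
      = ∫ s in Set.Ioc (0:ℝ) T, f s i := by
    intro i
    have hsub : (∫ s in (0:ℝ)..T, C.mulVec ((mexp A s).mulVec B))
        = ∫ s in (0:ℝ)..T, f s := by
      have h := intervalIntegral.integral_comp_sub_left
        (a := (0:ℝ)) (b := T) (fun s => C.mulVec ((mexp A s).mulVec B)) T
      simp only [sub_self, sub_zero] at h
      exact h.symm
    rw [hsub, intervalIntegral.integral_of_le hT.le, pi_integral_apply hfint i]
  rw [eNorm, eNorm]
  apply Real.sqrt_le_sqrt
  refine le_trans (le_of_eq ?_) (le_trans key (le_of_eq ?_))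
  · exact Finset.sum_congr rfl fun i _ => by rw [hLcomp i]
  · exact (Finset.sum_congr rfl fun i _ => by rw [hRcomp i]).symm
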